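/- Let v be an n×n Hermitian matrix whose eigenvalue vector lies in the cone Γ₂ = {λ ∈ ℝⁿ : σ₁(λ) > 0, σ₂(λ) > 0}, assume v is diagonal with entries v_1,…,v_n, and let A ∈ ℂⁿ. Then −Σ_{i≠j} A_i Ā_j ≥ −|Σ_i σ₂^{ii}(v) A_i|² / σ₂(v), where σ₂^{ii}(v) = Σ_{k≠i} v_k. -/

import Mathlib

open Finset

def sigma1 {n : ℕ} (lam : Fin n → ℝ) : ℝ := ∑ j, lam j

def sigma2 {n : ℕ} (lam : Fin n → ℝ) : ℝ :=
  ∑ j, ∑ k ∈ Finset.univ.filter (fun k => j < k), lam j * lam k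

private lemma mink (s P Q sig c : ℝ) (hP : 0 ≤ P) (hQ : 0 ≤ Q) (hsP : P ≤ s^2) (hc : c^2 ≤ P*Q) :
    (s^2 - P)*(sig^2 - Q) ≤ (s*sig - c)^2 := by
  rcases eq_or_lt_of_le hsP with he | hlt
  · nlinarith [sq_nonneg (s*sig - c)]
  · have hs2 : 0 < s^2 := lt_of_le_of_lt hP hlt
    have hE : 0 ≤ P*(s*sig-c)^2 - 2*(s*sig-c)*(s^2-P)*c + (s^2-P)^2*Q := by
      rcases eq_or_lt_of_le hP with hP0 | hP0
      · have hc0 : c = 0 := by nlinarith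
        subst hc0; nlinarith [mul_nonneg (sq_nonneg (s^2-P)) hQ]
      · nlinarith [sq_nonneg (P*(s*sig-c) - (s^2-P)*c), mul_nonneg (sq_nonneg (s^2-P)) (sub_nonneg.2 hc)]
    nlinarith [mul_nonneg (le_of_lt (sub_pos.2 hlt)) hE,
      mul_nonneg (sq_nonneg (s^2-P)) (sub_nonneg.2 hc), sq_nonneg (s*sig-c)]

private lemma sq_sum_eq (n : ℕ) (f : Fin n → ℝ) :
    (∑ j, f j)^2 = ∑ j, (f j)^2 + 2 * sigma2 f := by
  have hswap : ∑ j, ∑ k ∈ Finset.univ.filter (fun k => k < j), f j * f k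
      = sigma2 f := by
    rw [Finset.sum_comm' (t' := Finset.univ) (s' := fun k => Finset.univ.filter (fun j => k < j))]
    · unfold sigma2
      exact Finset.sum_congr rfl fun j _ => Finset.sum_congr rfl fun k _ => mul_comm _ _
    · intro x y
      simp
  have h1 : (∑ j, f j)^2 = ∑ j, ∑ k, f j * f k := by
    rw [sq, Finset.sum_mul_sum]
  rw [h1]
  have h2 : ∀ j : Fin n, ∑ k, f j * f k
      = (f j)^2 + (∑ k ∈ Finset.univ.filter (fun k => k < j), f j * f k
        + ∑ k ∈ Finset.univ.filter (fun k => j < k), f j * f k) := by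
    intro j
    rw [← Finset.sum_filter_add_sum_filter_not Finset.univ (fun k => k < j) (fun k => f j * f k)]
    have h3 : Finset.univ.filter (fun k => ¬ k < j) =
        insert j (Finset.univ.filter (fun k : Fin n => j < k)) := by
      ext k
      simp [not_lt, le_iff_lt_or_eq, or_comm, eq_comm]
    rw [h3, Finset.sum_insert (by simp), sq]
    ring
  rw [Finset.sum_congr rfl fun j _ => h2 j, Finset.sum_add_distrib, Finset.sum_add_distrib,
    hswap]
  unfold sigma2
  ring

/-- Guan–Ren–Wang inequality: for a diagonal matrix v with eigenvalues in Γ₂ and any A ∈ ℂⁿ,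
−Σ_{i≠j} A_i Ā_j ≥ −|Σ_i σ₂^{ii}(v) A_i|² / σ₂(v), where σ₂^{ii}(v) = Σ_{k≠i} v_k. -/
theorem stmt2 (n : ℕ) (v : Fin n → ℝ)
    (hv : 0 < sigma1 v ∧ 0 < sigma2 v) (A : Fin n → ℂ) :
    -(∑ i, ∑ j ∈ Finset.univ.erase i, A i * (starRingEnd ℂ) (A j)).re
      ≥ -(‖∑ i, ((∑ k ∈ Finset.univ.erase i, v k : ℝ) : ℂ) * A i‖)^2
          / sigma2 v := by
  obtain ⟨-, hσ2⟩ := hv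
  set s : ℝ := ∑ i, v i with hs
  set S : ℂ := ∑ i, A i with hS
  set x : Fin n → ℝ := fun i => (A i).re with hx
  set y : Fin n → ℝ := fun i => (A i).im with hy
  -- rewrite the LHS sum
  have hL : ∑ i, ∑ j ∈ Finset.univ.erase i, A i * (starRingEnd ℂ) (A j)
      = S * (starRingEnd ℂ) S - ∑ i, A i * (starRingEnd ℂ) (A i) := by
    have : ∀ i : Fin n, ∑ j ∈ Finset.univ.erase i, A i * (starRingEnd ℂ) (A j)
        = A i * (starRingEnd ℂ) S - A i * (starRingEnd ℂ) (A i) := by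
      intro i
      rw [← Finset.mul_sum, Finset.sum_erase_eq_sub (Finset.mem_univ i)]
      rw [mul_sub]
      congr 1
      rw [hS, map_sum]
    rw [Finset.sum_congr rfl fun i _ => this i, Finset.sum_sub_distrib, ← Finset.sum_mul]
  -- rewrite the B sum
  have hB : ∀ i : Fin n, (∑ k ∈ Finset.univ.erase i, v k : ℝ) = s - v i := by
    intro i
    rw [Finset.sum_erase_eq_sub (Finset.mem_univ i)]
  set B : ℂ := ∑ i, ((∑ k ∈ Finset.univ.erase i, v k : ℝ) : ℂ) * A i with hBdef
  have hBre : B.re = s * (∑ i, x i) - ∑ i, v i * x i := by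
    rw [hBdef, Complex.re_sum]
    have : ∀ i : Fin n, (((∑ k ∈ Finset.univ.erase i, v k : ℝ) : ℂ) * A i).re
        = (s - v i) * x i := by
      intro i
      rw [hB i]; simp [Complex.mul_re, hx]
    rw [Finset.sum_congr rfl fun i _ => this i]
    simp only [sub_mul]
    rw [Finset.sum_sub_distrib, Finset.mul_sum]
  have hBim : B.im = s * (∑ i, y i) - ∑ i, v i * y i := by
    rw [hBdef, Complex.im_sum]
    have : ∀ i : Fin n, (((∑ k ∈ Finset.univ.erase i, v k : ℝ) : ℂ) * A i).im
        = (s - v i) * y i := by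
      intro i
      rw [hB i]; simp [Complex.mul_im, hy]
    rw [Finset.sum_congr rfl fun i _ => this i]
    simp only [sub_mul]
    rw [Finset.sum_sub_distrib, Finset.mul_sum]
  rw [hL]
  -- numeric abbreviations
  set sx : ℝ := ∑ i, x i
  set sy : ℝ := ∑ i, y i
  set P : ℝ := ∑ i, (v i)^2 with hP
  set Qx : ℝ := ∑ i, (x i)^2 with hQx
  set Qy : ℝ := ∑ i, (y i)^2 with hQy
  set cx : ℝ := ∑ i, v i * x i
  set cy : ℝ := ∑ i, v i * y i
  have habs : (‖B‖)^2 = (s*sx - cx)^2 + (s*sy - cy)^2 := by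
    rw [Complex.sq_norm, Complex.normSq_apply, hBre, hBim]
    ring
  have hre : (S * (starRingEnd ℂ) S - ∑ i, A i * (starRingEnd ℂ) (A i)).re
      = (sx^2 + sy^2) - (Qx + Qy) := by
    rw [Complex.sub_re, Complex.mul_conj]
    have h1 : ∑ i, A i * (starRingEnd ℂ) (A i) = ((∑ i, Complex.normSq (A i) : ℝ) : ℂ) := by
      push_cast
      exact Finset.sum_congr rfl fun i _ => Complex.mul_conj (A i)
    rw [h1, Complex.ofReal_re, Complex.ofReal_re]
    have hSre : S.re = sx := by rw [hS, Complex.re_sum]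
    have hSim : S.im = sy := by rw [hS, Complex.im_sum]
    have h2 : Complex.normSq S = sx^2 + sy^2 := by
      rw [Complex.normSq_apply, hSre, hSim]; ring
    have h3 : ∑ i, Complex.normSq (A i) = Qx + Qy := by
      rw [hQx, hQy, ← Finset.sum_add_distrib]
      refine Finset.sum_congr rfl fun i _ => ?_
      rw [Complex.normSq_apply]; ring
    rw [h2, h3]
  rw [hre, habs, ge_iff_le, div_le_iff₀ hσ2]
  -- key inequalities
  have hs2 : 2 * sigma2 v = s^2 - P := by
    have := sq_sum_eq n v
    rw [hP]; rw [hs]; linarith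
  have hPpos : 0 ≤ P := Finset.sum_nonneg fun i _ => sq_nonneg _
  have hQxpos : 0 ≤ Qx := Finset.sum_nonneg fun i _ => sq_nonneg _
  have hQypos : 0 ≤ Qy := Finset.sum_nonneg fun i _ => sq_nonneg _
  have hsP : P ≤ s^2 := by linarith
  have hcx : cx^2 ≤ P * Qx := Finset.sum_mul_sq_le_sq_mul_sq Finset.univ v x
  have hcy : cy^2 ≤ P * Qy := Finset.sum_mul_sq_le_sq_mul_sq Finset.univ v y
  have hkx := mink s P Qx sx cx hPpos hQxpos hsP hcx
  have hky := mink s P Qy sy cy hPpos hQypos hsP hcy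
  nlinarith [sq_nonneg (s*sx - cx), sq_nonneg (s*sy - cy)]
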